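/- arXiv:1901.05899 — 2 statements merged into one kernel-verified Lean document; each statement's English description precedes it below -/
import Mathlib

section
/- For a class 𝒞 of Hausdorff topological vector spaces that is closed under closed graphs, the continuous-inverse property (C) implies the closed-graph property (G): every linear map between members of 𝒞 is continuous if and only if its graph is closed. -/
/-- A (Hausdorff, T₀) topological vector space over ℝ, bundled. -/
structure TVS where
  carrier : Type
  [grp : AddCommGroup carrier]
  [mod : Module ℝ carrier]
  [top : TopologicalSpace carrier]
  [tadd : IsTopologicalAddGroup carrier]
  [tsmul : ContinuousSMul ℝ carrier]
  [t2 : T2Space carrier]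

attribute [instance] TVS.grp TVS.mod TVS.top TVS.tadd TVS.tsmul TVS.t2

/-- (O) Open-mapping property. -/
def PropO (C : Set TVS) : Prop :=
  ∀ E ∈ C, ∀ F ∈ C, ∀ u : E.carrier →ₗ[ℝ] F.carrier,
    Continuous u → Function.Surjective u → IsOpenMap u

/-- (C) Continuous-inverse property. -/
def PropC (C : Set TVS) : Prop :=
  ∀ E ∈ C, ∀ F ∈ C, ∀ u : E.carrier ≃ₗ[ℝ] F.carrier,
    (Continuous u ↔ Continuous u.symm)

/-- (G) Closed-graph property. -/
def PropG (C : Set TVS) : Prop :=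
  ∀ E ∈ C, ∀ F ∈ C, ∀ u : E.carrier →ₗ[ℝ] F.carrier,
    (Continuous u ↔ IsClosed {p : E.carrier × F.carrier | p.2 = u p.1})

/-- Closure under quotients with closed subspaces. -/
def ClosedUnderQuotients (C : Set TVS) : Prop :=
  ∀ E ∈ C, ∀ (N : Submodule ℝ E.carrier), ∀ _ : IsClosed (N : Set E.carrier),
    TVS.mk (E.carrier ⧸ N) ∈ C

/-- Closure under closed graphs. -/
def ClosedUnderGraphs (C : Set TVS) : Prop :=
  ∀ E ∈ C, ∀ F ∈ C, ∀ u : E.carrier →ₗ[ℝ] F.carrier,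
    IsClosed {p : E.carrier × F.carrier | p.2 = u p.1} →
    TVS.mk ↥(LinearMap.graph u) ∈ C

/-- If 𝒞 is closed under closed graphs, then (C) implies (G). -/
theorem propC_implies_propG (C : Set TVS) (hG : ClosedUnderGraphs C)
    (hC : PropC C) : PropG C := by
  intro E hE F hF u
  constructor
  · intro hu
    exact isClosed_eq continuous_snd (hu.comp continuous_fst)
  · intro hclosed
    have hGmem : TVS.mk ↥(LinearMap.graph u) ∈ C := hG E hE F hF u hclosed
    let f : E.carrier →ₗ[ℝ] ↥(LinearMap.graph u) :=
      (LinearMap.id.prod u).codRestrict (LinearMap.graph u)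
        (fun x => by simp [LinearMap.mem_graph_iff])
    have hbij : Function.Bijective f := by
      constructor
      · intro a b hab
        have : (f a : E.carrier × F.carrier).1 = (f b : E.carrier × F.carrier).1 := by
          rw [hab]
        exact this
      · rintro ⟨⟨x, y⟩, hxy⟩
        refine ⟨x, ?_⟩
        ext
        · rfl
        · exact ((LinearMap.mem_graph_iff u _).mp hxy).symm
    let e : E.carrier ≃ₗ[ℝ] ↥(LinearMap.graph u) := LinearEquiv.ofBijective f hbij
    have hsymm : Continuous e.symm := by
      have h1 : Continuous fun p : ↥(LinearMap.graph u) => (p : E.carrier × F.carrier).1 :=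
        continuous_fst.comp continuous_subtype_val
      have : (fun p : ↥(LinearMap.graph u) => (p : E.carrier × F.carrier).1) = ⇑e.symm := by
        funext p
        apply e.injective
        rw [e.apply_symm_apply]
        ext
        · rfl
        · exact ((LinearMap.mem_graph_iff u _).mp p.2).symm
      rwa [this] at h1
    have he : Continuous e := (hC E hE (TVS.mk ↥(LinearMap.graph u)) hGmem e).mpr hsymm
    have : (fun x => (((e x) : E.carrier × F.carrier)).2) = ⇑u := by
      funext x; rfl
    rw [← this]
    exact continuous_snd.comp (continuous_subtype_val.comp he)
end

section
/- Let 𝒞 be a class of Hausdorff topological vector spaces that is closed under quotients by closed subspaces and closed under closed graphs. Then the three properties — (O) open-mapping, (C) continuous-inverse, and (G) closed-graph — are pairwise equivalent for 𝒞. -/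
noncomputable def graphEquiv {M N : Type} [AddCommGroup M] [Module ℝ M] [AddCommGroup N]
    [Module ℝ N] (u : M →ₗ[ℝ] N) : M ≃ₗ[ℝ] ↥(LinearMap.graph u) where
  toFun x := ⟨(x, u x), by simp [LinearMap.mem_graph_iff]⟩
  invFun p := p.1.1
  map_add' x y := by ext <;> simp
  map_smul' c x := by ext <;> simp
  left_inv x := rfl
  right_inv p := by
    ext
    · rfl
    · exact ((LinearMap.mem_graph_iff _ _).1 p.2).symm

lemma O_to_C (C : Set TVS) (hO : PropO C) : PropC C := by
  have key : ∀ E ∈ C, ∀ F ∈ C, ∀ u : E.carrier ≃ₗ[ℝ] F.carrier,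
      Continuous u → Continuous u.symm := by
    intro E hE F hF u hu
    have hopen : IsOpenMap u := hO E hE F hF u.toLinearMap hu u.surjective
    rw [continuous_def]
    intro U hU
    have : (u.symm : F.carrier → E.carrier) ⁻¹' U = u '' U := by
      ext y
      simp [LinearEquiv.symm_apply_eq, eq_comm, Set.mem_image,
        ← u.toEquiv.eq_symm_apply]
      constructor
      · intro h; exact ⟨u.symm y, h, by simp⟩
      · rintro ⟨x, hx, rfl⟩; simpa
    rw [this]
    exact hopen U hU
  intro E hE F hF u
  exact ⟨key E hE F hF u, fun h => by simpa using key F hF E hE u.symm h⟩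

lemma C_to_G (C : Set TVS) (hGr : ClosedUnderGraphs C) (hC : PropC C) : PropG C := by
  intro E hE F hF u
  constructor
  · intro hu
    exact isClosed_eq continuous_snd (hu.comp continuous_fst)
  · intro hcl
    have hmem : TVS.mk ↥(LinearMap.graph u) ∈ C := hGr E hE F hF u hcl
    have h := hC E hE (TVS.mk ↥(LinearMap.graph u)) hmem (graphEquiv u)
    have hsymm : Continuous (graphEquiv u).symm := by
      exact (continuous_fst.comp continuous_subtype_val)
    have he : Continuous (graphEquiv u) := h.2 hsymm
    have : Continuous fun x => (((graphEquiv u) x : E.carrier × F.carrier)).2 :=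
      continuous_snd.comp (continuous_subtype_val.comp he)
    exact this

lemma G_to_O (C : Set TVS) (hQ : ClosedUnderQuotients C) (hG : PropG C) : PropO C := by
  intro E hE F hF u hu hsurj
  set N := LinearMap.ker u with hN
  have hNc : IsClosed (N : Set E.carrier) := by
    have : (N : Set E.carrier) = u ⁻¹' {0} := by
      ext x; simp [hN, LinearMap.mem_ker]
    rw [this]
    exact (isClosed_singleton).preimage hu
  have hQmem : TVS.mk (E.carrier ⧸ N) ∈ C := hQ E hE N hNc
  haveI := hNc
  -- the induced linear equiv
  have hle : N ≤ LinearMap.ker u := le_rfl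
  set v : E.carrier ⧸ N →ₗ[ℝ] F.carrier := N.liftQ u hle with hv
  have hvmk : ∀ x, v (N.mkQ x) = u x := fun x => rfl
  have hvinj : Function.Injective v := by
    rw [← LinearMap.ker_eq_bot]
    exact Submodule.ker_liftQ_eq_bot N u hle le_rfl
  have hvsurj : Function.Surjective v := by
    intro y
    obtain ⟨x, rfl⟩ := hsurj y
    exact ⟨N.mkQ x, rfl⟩
  set e : (E.carrier ⧸ N) ≃ₗ[ℝ] F.carrier := LinearEquiv.ofBijective v ⟨hvinj, hvsurj⟩ with he
  have hvc : Continuous v := by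
    rw [(N.isOpenQuotientMap_mkQ).isQuotientMap.continuous_iff]
    exact hu
  -- graph of e.symm is closed
  have hgr : IsClosed {p : F.carrier × (E.carrier ⧸ N) | p.2 = e.symm.toLinearMap p.1} := by
    have : {p : F.carrier × (E.carrier ⧸ N) | p.2 = e.symm.toLinearMap p.1} =
        {p : F.carrier × (E.carrier ⧸ N) | p.1 = v p.2} := by
      ext p
      simp only [Set.mem_setOf_eq, LinearEquiv.coe_coe]
      rw [LinearEquiv.eq_symm_apply, eq_comm]
      rfl
    rw [this]
    exact isClosed_eq continuous_fst (hvc.comp continuous_snd)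
  have hsc : Continuous e.symm.toLinearMap := (hG F hF (TVS.mk (E.carrier ⧸ N)) hQmem
    e.symm.toLinearMap).2 hgr
  -- e is an open map
  have heo : IsOpenMap e := by
    intro U hU
    have : (e : (E.carrier ⧸ N) → F.carrier) '' U = e.symm ⁻¹' U := by
      ext y
      constructor
      · rintro ⟨x, hx, rfl⟩; simpa using hx
      · intro h; exact ⟨e.symm y, h, by simp⟩
    rw [this]
    exact (hsc : Continuous (e.symm : F.carrier → E.carrier ⧸ N)).isOpen_preimage U hU
  have : (u : E.carrier → F.carrier) = (e : (E.carrier ⧸ N) → F.carrier) ∘ N.mkQ := rfl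
  rw [this]
  exact heo.comp (N.isOpenMap_mkQ)

/-- For a class closed under quotients with closed subspaces and under closed graphs,
properties (O), (C), and (G) are pairwise equivalent. -/
theorem OCG_equivalence (C : Set TVS) (hQ : ClosedUnderQuotients C)
    (hGr : ClosedUnderGraphs C) :
    (PropO C ↔ PropC C) ∧ (PropC C ↔ PropG C) ∧ (PropO C ↔ PropG C) := by
  have h1 := O_to_C C
  have h2 := C_to_G C hGr
  have h3 := G_to_O C hQ
  exact ⟨⟨h1, fun h => h3 (h2 h)⟩, ⟨h2, fun h => h1 (h3 h)⟩, ⟨fun h => h2 (h1 h), h3⟩⟩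
end
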